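/- Let R be a commutative Bezout ring and let a ∈ R be a regular inpseudo-irreducible element. Then the quotient ring R/aR is a reduced ring (it has no nonzero nilpotent elements). -/

import Mathlib

/-- A regular element: a nonzero element that is not a zero divisor. -/
def IsRegularElem {R : Type*} [CommRing R] (a : R) : Prop :=
  a ≠ 0 ∧ ∀ x : R, a * x = 0 → x = 0

/-- Stable range 2. -/
def HasStableRange2 (R : Type*) [CommRing R] : Prop :=
  ∀ a b c : R, Ideal.span {a, b, c} = ⊤ →
    ∃ x y : R, Ideal.span {a + c * x, b + c * y} = ⊤

/-- Stable range 1. -/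
def HasStableRange1 (S : Type*) [CommRing S] : Prop :=
  ∀ a b : S, Ideal.span {a, b} = ⊤ → ∃ y : S, IsUnit (a + b * y)

/-- Inpseudo-irreducible element: any factorization is comaximal. -/
def IsInpseudoIrreducible {R : Type*} [CommRing R] (a : R) : Prop :=
  ∀ b c : R, a = b * c → Ideal.span {b, c} = ⊤

/-- Pseudo-irreducible element. -/
def IsPseudoIrreducible {R : Type*} [CommRing R] (a : R) : Prop :=
  ∀ b c : R, a = b * c → ¬IsUnit b → ¬IsUnit c → Ideal.span {b, c} ≠ ⊤

/-- Adequate element of a Bezout ring. -/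
def IsAdequateElem {R : Type*} [CommRing R] (a : R) : Prop :=
  ∀ b : R, ∃ r s : R, a = r * s ∧ Ideal.span {r, b} = ⊤ ∧
    ∀ s' : R, ¬IsUnit s' → s' ∣ s → Ideal.span {s', b} ≠ ⊤

/-- Avoidable element. -/
def IsAvoidableElem {R : Type*} [CommRing R] (a : R) : Prop :=
  ∀ b c : R, Ideal.span {a, b, c} = ⊤ →
    ∃ r s : R, a = r * s ∧ Ideal.span {r, b} = ⊤ ∧ Ideal.span {s, c} = ⊤ ∧
      Ideal.span {r, s} = ⊤

/-- Gelfand element. -/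
def IsGelfandElem {R : Type*} [CommRing R] (a : R) : Prop :=
  ∀ b c : R, Ideal.span {a, b, c} = ⊤ →
    ∃ r s : R, a = r * s ∧ Ideal.span {r, b} = ⊤ ∧ Ideal.span {s, c} = ⊤

/-- Semipotent element. -/
def IsSemipotentElem {R : Type*} [CommRing R] (a : R) : Prop :=
  ∀ b : R,
    Ideal.Quotient.mk (Ideal.span {a}) b ∉
      Ideal.jacobson (⊥ : Ideal (R ⧸ Ideal.span ({a} : Set R))) →
    ∃ r s : R, ¬IsUnit r ∧ ¬IsUnit s ∧ a = r * s ∧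
      Ideal.span {r, b} = ⊤ ∧ Ideal.span {r, s} = ⊤

/-- Gelfand ring. -/
def IsGelfandRing (S : Type*) [CommRing S] : Prop :=
  ∀ a b : S, a + b = 1 → ∃ r s : S, (1 + a * r) * (1 + b * s) = 0

/-- Clean ring: every element is a unit plus an idempotent. -/
def IsCleanRing (S : Type*) [CommRing S] : Prop :=
  ∀ a : S, ∃ u e : S, IsUnit u ∧ IsIdempotentElem e ∧ a = u + e

/-- Von Neumann regular ring. -/
def IsVNRegularRing (S : Type*) [CommRing S] : Prop :=
  ∀ a : S, ∃ x : S, a = a * x * a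

/-- Semiregular ring: S/J(S) is von Neumann regular and idempotents lift modulo J(S). -/
def IsSemiregularRing (S : Type*) [CommRing S] : Prop :=
  IsVNRegularRing (S ⧸ Ideal.jacobson (⊥ : Ideal S)) ∧
  ∀ x : S, IsIdempotentElem (Ideal.Quotient.mk (Ideal.jacobson (⊥ : Ideal S)) x) →
    ∃ e : S, IsIdempotentElem e ∧
      Ideal.Quotient.mk (Ideal.jacobson (⊥ : Ideal S)) e =
        Ideal.Quotient.mk (Ideal.jacobson (⊥ : Ideal S)) x

/-- Semipotent ring: every principal ideal not contained in the Jacobson radical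
contains a nonzero idempotent. -/
def IsSemipotentRing (S : Type*) [CommRing S] : Prop :=
  ∀ b : S, ¬(Ideal.span {b} ≤ Ideal.jacobson (⊥ : Ideal S)) →
    ∃ e : S, e ≠ 0 ∧ IsIdempotentElem e ∧ e ∈ Ideal.span ({b} : Set S)

/-- Indecomposable ring: the only idempotents are 0 and 1. -/
def IsIndecomposableRing (S : Type*) [CommRing S] : Prop :=
  ∀ e : S, IsIdempotentElem e → e = 0 ∨ e = 1

/-- Semihereditary ring: every finitely generated ideal is projective. -/
def IsSemihereditaryRing (R : Type*) [CommRing R] : Prop :=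
  ∀ I : Ideal R, I.FG → Module.Projective R I

/-- Regular range 1. -/
def HasRegularRange1 (R : Type*) [CommRing R] : Prop :=
  ∀ a b : R, Ideal.span {a, b} = ⊤ → ∃ t : R, IsRegularElem (a + b * t)

/-- Gelfand range 1. -/
def HasGelfandRange1 (R : Type*) [CommRing R] : Prop :=
  ∀ a b : R, Ideal.span {a, b} = ⊤ → ∃ t : R, IsGelfandElem (a + b * t)

/-- A rectangular matrix admits diagonal reduction with successive divisibility
of the diagonal entries. -/
def AdmitsDiagReduction {R : Type*} [CommRing R] {n m : ℕ}
    (A : Matrix (Fin n) (Fin m) R) : Prop :=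
  ∃ (P : Matrix (Fin n) (Fin n) R) (Q : Matrix (Fin m) (Fin m) R),
    IsUnit P ∧ IsUnit Q ∧
    (∀ (i : Fin n) (j : Fin m), (i : ℕ) ≠ (j : ℕ) → (P * A * Q) i j = 0) ∧
    (∀ (k : ℕ) (hn : k + 1 < n) (hm : k + 1 < m),
      (P * A * Q) ⟨k, Nat.lt_of_succ_lt hn⟩ ⟨k, Nat.lt_of_succ_lt hm⟩ ∣
        (P * A * Q) ⟨k + 1, hn⟩ ⟨k + 1, hm⟩)

/-- Elementary divisor ring: every matrix admits diagonal reduction. -/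
def IsElementaryDivisorRing (R : Type*) [CommRing R] : Prop :=
  ∀ (n m : ℕ) (A : Matrix (Fin n) (Fin m) R), AdmitsDiagReduction A



private theorem aux_sq {R : Type*} [CommRing R] [IsBezout R] (a : R)
    (hreg : (a ≠ 0 ∧ ∀ x : R, a * x = 0 → x = 0))
    (hin : ∀ b c : R, a = b * c → Ideal.span {b, c} = ⊤)
    (x : R) (hx : x ^ 2 ∈ Ideal.span ({a} : Set R)) : x ∈ Ideal.span ({a} : Set R) := by
  set d := IsBezout.gcd a x with hd
  obtain ⟨a₁, ha₁⟩ : d ∣ a := IsBezout.gcd_dvd_left a x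
  obtain ⟨x₁, hx₁⟩ : d ∣ x := IsBezout.gcd_dvd_right a x
  obtain ⟨α, β, hαβ⟩ := IsBezout.gcd_eq_sum a x
  rw [← hd] at hαβ
  have hdreg : ∀ z : R, d * z = 0 → z = 0 := by
    intro z hz
    apply hreg.2 z
    rw [ha₁, mul_comm d a₁, mul_assoc, hz, mul_zero]
  have h1 : α * a₁ + β * x₁ = 1 := by
    have := hdreg (α * a₁ + β * x₁ - 1) (by linear_combination -α * ha₁ - β * hx₁ + hαβ)
    linear_combination this
  obtain ⟨t, ht⟩ : a ∣ x ^ 2 := (Ideal.mem_span_singleton).mp hx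
  have ht' : d * x₁ ^ 2 = a₁ * t := by
    have := hdreg (d * x₁ ^ 2 - a₁ * t)
      (by linear_combination ht + t * ha₁ - (x + d * x₁) * hx₁)
    linear_combination this
  have hdvd : a₁ ∣ d := by
    refine ⟨d * (α * α * a₁ + 2 * α * β * x₁) + β * β * t, ?_⟩
    have h2 : a₁ * (α * α * a₁ + 2 * α * β * x₁) + β * β * x₁ ^ 2 = 1 := by
      linear_combination (α * a₁ + β * x₁ + 1) * h1
    linear_combination -d * h2 + β * β * ht'
  obtain ⟨m, hm⟩ := hdvd
  have hcop := hin d a₁ ha₁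
  have h1mem : (1 : R) ∈ Ideal.span ({d, a₁} : Set R) := by rw [hcop]; trivial
  obtain ⟨p, q, hpq⟩ := Ideal.mem_span_pair.mp h1mem
  have hunit : IsUnit a₁ := IsUnit.of_mul_eq_one (a := a₁) (p * m + q)
    (by linear_combination hpq - p * hm)
  obtain ⟨v, hv⟩ := hunit.exists_left_inv
  rw [Ideal.mem_span_singleton]
  refine ⟨v * x₁, ?_⟩
  calc x = d * x₁ := hx₁
    _ = (v * a₁) * (d * x₁) := by rw [hv, one_mul]
    _ = (d * a₁) * (v * x₁) := by ring
    _ = a * (v * x₁) := by rw [← ha₁]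


theorem stmt3 {R : Type*} [CommRing R] [IsBezout R] (a : R)
    (hreg : IsRegularElem a) (hin : IsInpseudoIrreducible a) :
    IsReduced (R ⧸ Ideal.span ({a} : Set R)) := by
  have key := aux_sq a hreg hin
  have hrad : ∀ n : ℕ, ∀ x : R, x ^ n ∈ Ideal.span ({a} : Set R) → n ≠ 0 →
      x ∈ Ideal.span ({a} : Set R) := by
    intro n
    induction n using Nat.strong_induction_on with
    | _ n ih =>
      intro x hx hn
      match n, hn with
      | 1, _ => simpa using hx
      | (k+2), _ =>
        have h2 : (x ^ (k+1)) ^ 2 ∈ Ideal.span ({a} : Set R) := by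
          have he : (x ^ (k+1)) ^ 2 = x ^ (k+2) * x ^ k := by ring
          rw [he]; exact Ideal.mul_mem_right _ _ hx
        exact ih (k+1) (by omega) x (key _ h2) (by omega)
  constructor
  intro y hy
  obtain ⟨r, rfl⟩ := Ideal.Quotient.mk_surjective y
  obtain ⟨n, hn⟩ := hy
  rw [← map_pow, Ideal.Quotient.eq_zero_iff_mem] at hn
  rw [Ideal.Quotient.eq_zero_iff_mem]
  rcases Nat.eq_zero_or_pos n with h0 | hpos
  · subst h0
    simp only [pow_zero] at hn
    exact (Ideal.eq_top_iff_one _).mpr hn ▸ Submodule.mem_top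
  · exact hrad n r hn (by omega)
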